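/- Let $G$ be a finite digraph and $f : V \to \mathbb{R}^\times$ non-vanishing. Representing homology classes by harmonic chains, the $(f,f)$-weighted path homology of $G$ (using the $f$-twisted boundary operators $\partial_n^f$ and the inner products $\iota_f$) is isometrically isomorphic in each degree to the usual path homology $H_n(G)$ equipped with the standard inner product on harmonic chains. -/

import Mathlib

open LinearMap Submodule

/-- The `f`-weighted boundary operator `∂ₙ₊₁^f` on `Λₙ₊₁(V)`. -/
noncomputable def pathBoundary (V : Type) (f : V → ℝ) (n : ℕ) :
    ((Fin (n + 2) → V) →₀ ℝ) →ₗ[ℝ] ((Fin (n + 1) → V) →₀ ℝ) :=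
  Finsupp.lsum ℝ fun p => LinearMap.toSpanSingleton ℝ _
    (∑ i : Fin (n + 2), ((-1 : ℝ) ^ (i : ℕ) * f (p i)) •
      Finsupp.single (p ∘ i.succAbove) 1)

/-- Projection of `Λₙ(V)` onto the span of regular elementary paths (killing
irregular elementary paths); it realizes `𝓡ₙ(V)` inside `Λₙ(V)`. -/
noncomputable def regProj (V : Type) [DecidableEq V] (n : ℕ) :
    ((Fin (n + 1) → V) →₀ ℝ) →ₗ[ℝ] ((Fin (n + 1) → V) →₀ ℝ) :=
  Finsupp.lsum ℝ fun p => LinearMap.toSpanSingleton ℝ _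
    (if ∃ i : Fin n, p i.castSucc = p i.succ then 0 else Finsupp.single p 1)

/-- The `f`-weighted regular boundary `∂ₙ^f : 𝓡ₙ(V) → 𝓡ₙ₋₁(V)` (realized on
spans of regular paths, with `∂₀ = 0`). -/
noncomputable def regBoundary (V : Type) [DecidableEq V] (f : V → ℝ) :
    ∀ n, ((Fin (n + 1) → V) →₀ ℝ) →ₗ[ℝ] ((Fin (n - 1 + 1) → V) →₀ ℝ)
  | 0 => 0
  | (n + 1) => (regProj V n).comp (pathBoundary V f n)

/-- The span `𝓐ₙ(G)` of allowed elementary paths of the digraph `G = (V, E)`. -/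
noncomputable def AllowedL (V : Type) (E : V → V → Prop) (n : ℕ) :
    Submodule ℝ ((Fin (n + 1) → V) →₀ ℝ) :=
  Submodule.span ℝ {x | ∃ p : Fin (n + 1) → V,
    (∀ i : Fin n, E (p i.castSucc) (p i.succ)) ∧ x = Finsupp.single p 1}

/-- The `f`-weighted `∂`-invariant space `Ωₙ^f(G) = 𝓐ₙ(G) ∩ (∂ₙ^f)⁻¹(𝓐ₙ₋₁(G))`. -/
noncomputable def OmegaL (V : Type) [DecidableEq V] (E : V → V → Prop)
    (f : V → ℝ) : ∀ n, Submodule ℝ ((Fin (n + 1) → V) →₀ ℝ)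
  | 0 => AllowedL V E 0
  | (n + 1) => AllowedL V E (n + 1) ⊓
      Submodule.comap (regBoundary V f (n + 1)) (AllowedL V E n)

/-- The `g`-weighted inner product `ι_g` on `Λₙ(V)`. -/
noncomputable def pathInner (V : Type) [DecidableEq V] (g : V → ℝ) (n : ℕ) :
    ((Fin (n + 1) → V) →₀ ℝ) →ₗ[ℝ] ((Fin (n + 1) → V) →₀ ℝ) →ₗ[ℝ] ℝ :=
  Finsupp.lsum ℝ fun p => LinearMap.toSpanSingleton ℝ _
    (Finsupp.lsum ℝ fun q => LinearMap.toSpanSingleton ℝ ℝ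
      (∏ i, (g (p i) * g (q i) * (if p i = q i then 1 else 0))))

/-- The space of harmonic `n`-chains of the `(f,g)`-weighted complex
`Ω^{f,g}_*(G)`: elements `ω ∈ Ωₙ` with `∂ₙ^f ω = 0` that are `ι_g`-orthogonal
to `∂ₙ₊₁^f(Ωₙ₊₁)`; this is `Ker ∂ₙ^f ∩ Ker (∂ₙ₊₁^f)*`, i.e. `Ker Δₙ^{f,g}`. -/
noncomputable def Harm (V : Type) [DecidableEq V] (E : V → V → Prop)
    (f g : V → ℝ) (n : ℕ) : Submodule ℝ ((Fin (n + 1) → V) →₀ ℝ) :=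
  OmegaL V E f n ⊓ LinearMap.ker (regBoundary V f n) ⊓
    ⨅ η : OmegaL V E f (n + 1),
      LinearMap.ker (pathInner V g n (regBoundary V f (n + 1) (η : _)))

noncomputable def scaleL (V : Type) (h : V → ℝ) (n : ℕ) :
    ((Fin (n + 1) → V) →₀ ℝ) →ₗ[ℝ] ((Fin (n + 1) → V) →₀ ℝ) :=
  Finsupp.lsum ℝ fun p => LinearMap.toSpanSingleton ℝ _
    ((∏ i, h (p i)) • Finsupp.single p 1)

lemma scaleL_single (V : Type) (h : V → ℝ) (n : ℕ) (p : Fin (n+1) → V) :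
    scaleL V h n (Finsupp.single p 1) = (∏ i, h (p i)) • Finsupp.single p 1 := by
  simp [scaleL]

lemma pathBoundary_single (V : Type) (f : V → ℝ) (n : ℕ) (p : Fin (n+2) → V) :
    pathBoundary V f n (Finsupp.single p 1) =
      ∑ i : Fin (n + 2), ((-1 : ℝ) ^ (i : ℕ) * f (p i)) •
        Finsupp.single (p ∘ i.succAbove) 1 := by
  simp [pathBoundary]

lemma regProj_single (V : Type) [DecidableEq V] (n : ℕ) (p : Fin (n+1) → V) :
    regProj V n (Finsupp.single p 1) =
      (if ∃ i : Fin n, p i.castSucc = p i.succ then 0 else Finsupp.single p 1) := by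
  simp only [regProj, Finsupp.lsum_single, LinearMap.toSpanSingleton_apply, one_smul]

lemma pathInner_single (V : Type) [DecidableEq V] (g : V → ℝ) (n : ℕ)
    (p q : Fin (n+1) → V) :
    pathInner V g n (Finsupp.single p 1) (Finsupp.single q 1) =
      ∏ i, (g (p i) * g (q i) * (if p i = q i then 1 else 0)) := by
  simp only [pathInner, Finsupp.lsum_single, LinearMap.toSpanSingleton_apply, one_smul,
    smul_eq_mul, mul_one, one_mul]

lemma scaleL_comp_pathBoundary (V : Type) (h g : V → ℝ) (n : ℕ) :
    (scaleL V h n).comp (pathBoundary V (fun v => h v * g v) n) =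
      (pathBoundary V g n).comp (scaleL V h (n + 1)) := by
  refine Finsupp.lhom_ext' fun p => LinearMap.ext_ring ?_
  simp only [LinearMap.comp_apply, Finsupp.lsingle_apply, pathBoundary_single,
    scaleL_single, map_sum, map_smul, smul_smul, Finset.smul_sum]
  refine Finset.sum_congr rfl fun i _ => ?_
  rw [Fin.prod_univ_succAbove (fun k => h (p k)) i]
  simp only [Function.comp]
  ring_nf

lemma scaleL_comp_regProj (V : Type) [DecidableEq V] (h : V → ℝ) (n : ℕ) :
    (scaleL V h n).comp (regProj V n) = (regProj V n).comp (scaleL V h n) := by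
  refine Finsupp.lhom_ext' fun p => LinearMap.ext_ring ?_
  simp only [LinearMap.comp_apply, Finsupp.lsingle_apply, regProj_single, scaleL_single,
    map_smul]
  split_ifs <;> simp [regProj_single, scaleL_single, Finsupp.smul_single, *]

lemma scaleL_comp_regBoundary (V : Type) [DecidableEq V] (h g : V → ℝ) (n : ℕ) :
    (scaleL V h (n - 1)).comp (regBoundary V (fun v => h v * g v) n) =
      (regBoundary V g n).comp (scaleL V h n) := by
  cases n with
  | zero => simp [regBoundary]
  | succ m =>
    show (scaleL V h m).comp _ = _
    rw [regBoundary, regBoundary, ← LinearMap.comp_assoc, scaleL_comp_regProj,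
      LinearMap.comp_assoc, scaleL_comp_pathBoundary, LinearMap.comp_assoc]

lemma scaleL_comp_scaleL (V : Type) (h h' : V → ℝ) (n : ℕ) :
    (scaleL V h n).comp (scaleL V h' n) = scaleL V (fun v => h v * h' v) n := by
  refine Finsupp.lhom_ext' fun p => LinearMap.ext_ring ?_
  simp only [LinearMap.comp_apply, Finsupp.lsingle_apply, scaleL_single, map_smul,
    smul_smul, Finset.prod_mul_distrib]
  ring_nf

lemma scaleL_one (V : Type) (n : ℕ) : scaleL V (fun _ => (1:ℝ)) n = LinearMap.id := by
  refine Finsupp.lhom_ext' fun p => LinearMap.ext_ring ?_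
  simp [scaleL_single]

lemma scaleL_mem_allowed (V : Type) (E : V → V → Prop) (h : V → ℝ) (n : ℕ)
    {x : (Fin (n+1) → V) →₀ ℝ} (hx : x ∈ AllowedL V E n) :
    scaleL V h n x ∈ AllowedL V E n := by
  induction hx using Submodule.span_induction with
  | mem y hy =>
    obtain ⟨p, hp, rfl⟩ := hy
    rw [scaleL_single]
    exact Submodule.smul_mem _ _ (Submodule.subset_span ⟨p, hp, rfl⟩)
  | zero => simp
  | add a b _ _ ha hb => rw [map_add]; exact Submodule.add_mem _ ha hb
  | smul c a _ ha => rw [map_smul]; exact Submodule.smul_mem _ _ ha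

lemma pathInner_scaleL (V : Type) [DecidableEq V] (g h : V → ℝ) (n : ℕ)
    (a b : (Fin (n+1) → V) →₀ ℝ) :
    pathInner V g n (scaleL V h n a) (scaleL V h n b) =
      pathInner V (fun v => g v * h v) n a b := by
  induction a using Finsupp.induction_linear with
  | zero => simp
  | add => simp_all [map_add]
  | single p c =>
    induction b using Finsupp.induction_linear with
    | zero => simp
    | add => simp_all [map_add]
    | single q d =>
      rw [show (Finsupp.single p c) = c • Finsupp.single p 1 by simp,
        show (Finsupp.single q d) = d • Finsupp.single q 1 by simp]
      simp only [map_smul, scaleL_single, LinearMap.smul_apply, smul_eq_mul]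
      rw [pathInner_single, pathInner_single]
      rw [show (∏ i, (g (p i) * h (p i) * (g (q i) * h (q i)) * (if p i = q i then 1 else 0)))
        = (∏ i, h (p i)) * (∏ i, h (q i)) * ∏ i, (g (p i) * g (q i) * (if p i = q i then 1 else 0)) by
          rw [← Finset.prod_mul_distrib, ← Finset.prod_mul_distrib]
          exact Finset.prod_congr rfl fun i _ => by ring]
      ring

lemma mem_Omega_scaleL (V : Type) [DecidableEq V] (E : V → V → Prop)
    (h g g₂ : V → ℝ) (hg2 : (fun v => h v * g v) = g₂) (n : ℕ)
    {x : (Fin (n+1) → V) →₀ ℝ} (hx : x ∈ OmegaL V E g₂ n) :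
    scaleL V h n x ∈ OmegaL V E g n := by
  subst hg2
  cases n with
  | zero => exact scaleL_mem_allowed V E h 0 hx
  | succ m =>
    refine ⟨scaleL_mem_allowed V E h (m+1) hx.1, ?_⟩
    have := congrFun (congrArg DFunLike.coe (scaleL_comp_regBoundary V h g (m+1))) x
    simp only [LinearMap.comp_apply] at this
    show regBoundary V g (m+1) (scaleL V h (m+1) x) ∈ AllowedL V E m
    rw [← this]
    exact scaleL_mem_allowed V E h m hx.2

lemma mem_Harm_scaleL (V : Type) [DecidableEq V] (E : V → V → Prop)
    (h h' g g₂ : V → ℝ) (hinv : ∀ v, h v * h' v = 1)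
    (hg2 : (fun v => h v * g v) = g₂) (n : ℕ)
    {x : (Fin (n+1) → V) →₀ ℝ} (hx : x ∈ Harm V E g₂ g₂ n) :
    scaleL V h n x ∈ Harm V E g g n := by
  subst hg2
  obtain ⟨⟨hΩ, hker⟩, horth⟩ := hx
  have horth' : ∀ η : OmegaL V E (fun v => h v * g v) (n+1),
      x ∈ LinearMap.ker (pathInner V (fun v => h v * g v) n
        (regBoundary V (fun v => h v * g v) (n+1) (η : _))) :=
    fun η => (Submodule.mem_iInf _).mp horth η
  refine ⟨⟨mem_Omega_scaleL V E h g _ rfl n hΩ, ?_⟩, ?_⟩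
  · have := congrFun (congrArg DFunLike.coe (scaleL_comp_regBoundary V h g n)) x
    simp only [LinearMap.comp_apply] at this
    simp only [SetLike.mem_coe]
    rw [LinearMap.mem_ker, ← this, show regBoundary V (fun v => h v * g v) n x = 0 from hker,
      map_zero]
  · simp only [SetLike.mem_coe]
    rw [Submodule.mem_iInf]
    rintro ⟨η', hη'⟩
    rw [LinearMap.mem_ker]
    -- η := scaleL h' η' lies in Omega (h*g)
    have hη : scaleL V h' (n+1) η' ∈ OmegaL V E (fun v => h v * g v) (n+1) := by
      refine mem_Omega_scaleL V E h' (fun v => h v * g v) g ?_ (n+1) hη'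
      funext v
      rw [← mul_assoc, mul_comm (h' v), hinv, one_mul]
    have hrec : scaleL V h (n+1) (scaleL V h' (n+1) η') = η' := by
      have := congrFun (congrArg DFunLike.coe (scaleL_comp_scaleL V h h' (n+1))) η'
      simp only [LinearMap.comp_apply] at this
      rw [this, show (fun v => h v * h' v) = (fun _ => (1:ℝ)) from funext hinv,
        scaleL_one, LinearMap.id_apply]
    have hbd : regBoundary V g (n+1) η' =
        scaleL V h n (regBoundary V (fun v => h v * g v) (n+1) (scaleL V h' (n+1) η')) := by
      conv_lhs => rw [← hrec]
      have := congrFun (congrArg DFunLike.coe (scaleL_comp_regBoundary V h g (n+1)))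
        (scaleL V h' (n+1) η')
      simp only [LinearMap.comp_apply] at this
      exact this.symm
    show pathInner V g n (regBoundary V g (n+1) η') (scaleL V h n x) = 0
    rw [hbd, pathInner_scaleL,
      show (fun v => g v * h v) = (fun v => h v * g v) from funext fun v => mul_comm _ _]
    exact LinearMap.mem_ker.mp (horth' ⟨_, hη⟩)

/-- representing homology classes by harmonic chains, the
`(f,f)`-weighted path homology of a digraph `G` is, in each degree,
isometrically isomorphic to the usual (unweighted) path homology of `G` with
the standard inner product on harmonic chains. -/
theorem stmt12 (V : Type) [Fintype V] [DecidableEq V] (E : V → V → Prop)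
    (hE : ∀ u v, E u v → u ≠ v) (f : V → ℝ) (hf : ∀ v, f v ≠ 0) (n : ℕ) :
    ∃ e : Harm V E f f n ≃ₗ[ℝ] Harm V E (fun _ => 1) (fun _ => 1) n,
      ∀ a b : Harm V E f f n,
        pathInner V (fun _ => 1) n (e a : _) (e b : _)
          = pathInner V f n (a : _) (b : _) := by
  set finv : V → ℝ := fun v => (f v)⁻¹ with hfinv
  have hinv1 : ∀ v, f v * finv v = 1 := fun v => mul_inv_cancel₀ (hf v)
  have hinv2 : ∀ v, finv v * f v = 1 := fun v => inv_mul_cancel₀ (hf v)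
  have hFwd : ∀ x ∈ Harm V E f f n, scaleL V f n x ∈ Harm V E (fun _ => 1) (fun _ => 1) n := by
    intro x hx
    exact mem_Harm_scaleL V E f finv (fun _ => 1) f hinv1 (funext fun v => mul_one _) n hx
  have hBwd : ∀ x ∈ Harm V E (fun _ => 1) (fun _ => 1) n, scaleL V finv n x ∈ Harm V E f f n := by
    intro x hx
    exact mem_Harm_scaleL V E finv f f (fun _ => 1) hinv2 (funext hinv2) n hx
  have hcomp1 : ∀ x, scaleL V f n (scaleL V finv n x) = x := by
    intro x
    have := congrFun (congrArg DFunLike.coe (scaleL_comp_scaleL V f finv n)) x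
    simp only [LinearMap.comp_apply] at this
    rw [this, show (fun v => f v * finv v) = (fun _ => (1:ℝ)) from funext hinv1,
      scaleL_one, LinearMap.id_apply]
  have hcomp2 : ∀ x, scaleL V finv n (scaleL V f n x) = x := by
    intro x
    have := congrFun (congrArg DFunLike.coe (scaleL_comp_scaleL V finv f n)) x
    simp only [LinearMap.comp_apply] at this
    rw [this, show (fun v => finv v * f v) = (fun _ => (1:ℝ)) from funext hinv2,
      scaleL_one, LinearMap.id_apply]
  refine ⟨LinearEquiv.ofLinear ((scaleL V f n).restrict hFwd)
    ((scaleL V finv n).restrict hBwd) ?_ ?_, ?_⟩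
  · apply LinearMap.ext; intro x
    apply Subtype.ext
    simp only [LinearMap.comp_apply, LinearMap.restrict_coe_apply, LinearMap.id_apply]
    exact hcomp1 x
  · apply LinearMap.ext; intro x
    apply Subtype.ext
    simp only [LinearMap.comp_apply, LinearMap.restrict_coe_apply, LinearMap.id_apply]
    exact hcomp2 x
  · intro a b
    show pathInner V (fun _ => 1) n (scaleL V f n (a : _)) (scaleL V f n (b : _)) = _
    rw [pathInner_scaleL, show (fun v => (1:ℝ) * f v) = f from funext fun v => one_mul _]
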